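/- The set of processes expressible as a difference of two nonnegative supermartingales is closed under addition and under multiplication by arbitrary real scalars, hence forms a vector space; together with closure under pointwise minimum, it is a Riesz space (vector lattice) under the pointwise order. -/

import Mathlib

open MeasureTheory Filter

/-- `X` is a quasimartingale, i.e. a difference of two nonnegative supermartingales
(Rao decomposition). -/
def IsQuasimartingale {Ω : Type*} {m : MeasurableSpace Ω}
    (ℱ : MeasureTheory.Filtration ℕ m) (μ : MeasureTheory.Measure Ω)
    (X : ℕ → Ω → ℝ) : Prop :=
  ∃ A B : ℕ → Ω → ℝ, MeasureTheory.Supermartingale A ℱ μ ∧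
    MeasureTheory.Supermartingale B ℱ μ ∧
    (∀ n, 0 ≤ᵐ[μ] A n) ∧ (∀ n, 0 ≤ᵐ[μ] B n) ∧ X = A - B

/-- The pointwise infimum of two real-valued supermartingales is a supermartingale. -/
lemma Supermartingale.inf' {Ω : Type*} {m : MeasurableSpace Ω} {μ : Measure Ω}
    {ℱ : Filtration ℕ m} {f g : ℕ → Ω → ℝ}
    (hf : Supermartingale f ℱ μ) (hg : Supermartingale g ℱ μ) :
    Supermartingale (f ⊓ g) ℱ μ := by
  have hint : ∀ i, Integrable ((f ⊓ g) i) μ := fun i =>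
    (hf.integrable i).inf (hg.integrable i)
  refine ⟨fun i => @StronglyMeasurable.inf _ _ _ _ (ℱ i) _ _ _ (hf.stronglyAdapted i) (hg.stronglyAdapted i),
    fun i j hij => ?_, hint⟩
  have h1 : μ[(f ⊓ g) j | ℱ i] ≤ᵐ[μ] f i := by
    refine (condExp_mono (hint j) (hf.integrable j) ?_).trans (hf.2.1 i j hij)
    exact Filter.Eventually.of_forall fun ω => inf_le_left
  have h2 : μ[(f ⊓ g) j | ℱ i] ≤ᵐ[μ] g i := by
    refine (condExp_mono (hint j) (hg.integrable j) ?_).trans (hg.2.1 i j hij)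
    exact Filter.Eventually.of_forall fun ω => inf_le_right
  filter_upwards [h1, h2] with ω h1 h2
  exact le_inf h1 h2

/-- The quasimartingales (differences of nonnegative supermartingales) form a vector
space closed under pointwise minimum, i.e. a Riesz space under the pointwise order. -/
theorem isQuasimartingale_add_smul_inf
    {Ω : Type*} {m : MeasurableSpace Ω} {μ : Measure Ω} [IsProbabilityMeasure μ]
    {ℱ : Filtration ℕ m} {X Y : ℕ → Ω → ℝ}
    (hX : IsQuasimartingale ℱ μ X) (hY : IsQuasimartingale ℱ μ Y) :
    IsQuasimartingale ℱ μ (X + Y) ∧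
      (∀ c : ℝ, IsQuasimartingale ℱ μ (c • X)) ∧
      IsQuasimartingale ℱ μ (X ⊓ Y) := by
  obtain ⟨A, B, hA, hB, hA0, hB0, hXeq⟩ := hX
  obtain ⟨A', B', hA', hB', hA0', hB0', hYeq⟩ := hY
  subst hXeq hYeq
  refine ⟨?_, ?_, ?_⟩
  · refine ⟨A + A', B + B', hA.add hA', hB.add hB', fun n => ?_, fun n => ?_, by abel⟩
    · filter_upwards [hA0 n, hA0' n] with ω h1 h2
      exact add_nonneg h1 h2
    · filter_upwards [hB0 n, hB0' n] with ω h1 h2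
      exact add_nonneg h1 h2
  · intro c
    rcases le_or_gt 0 c with hc | hc
    · refine ⟨c • A, c • B, hA.smul_nonneg hc, hB.smul_nonneg hc, fun n => ?_, fun n => ?_,
        by ext n ω; simp [mul_sub]⟩
      · filter_upwards [hA0 n] with ω h1
        exact mul_nonneg hc h1
      · filter_upwards [hB0 n] with ω h1
        exact mul_nonneg hc h1
    · have hc' : (0:ℝ) ≤ -c := by linarith
      refine ⟨(-c) • B, (-c) • A, hB.smul_nonneg hc', hA.smul_nonneg hc', fun n => ?_,
        fun n => ?_, by ext n ω; simp [mul_sub]; ring⟩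
      · filter_upwards [hB0 n] with ω h1
        exact mul_nonneg hc' h1
      · filter_upwards [hA0 n] with ω h1
        exact mul_nonneg hc' h1
  · refine ⟨(A + B') ⊓ (A' + B), B + B',
      Supermartingale.inf' (hA.add hB') (hA'.add hB), hB.add hB', fun n => ?_, fun n => ?_, ?_⟩
    · filter_upwards [hA0 n, hB0 n, hA0' n, hB0' n] with ω h1 h2 h3 h4
      exact le_inf (add_nonneg h1 h4) (add_nonneg h3 h2)
    · filter_upwards [hB0 n, hB0' n] with ω h1 h2
      exact add_nonneg h1 h2
    · funext n ω
      show min (A n ω - B n ω) (A' n ω - B' n ω)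
        = min (A n ω + B' n ω) (A' n ω + B n ω) - (B n ω + B' n ω)
      rcases le_total (A n ω - B n ω) (A' n ω - B' n ω) with h | h
      · rw [min_eq_left h, min_eq_left (by linarith)]; ring
      · rw [min_eq_right h, min_eq_right (by linarith)]; ring
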